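/- Let q : {(r,r₁) : 0 ≤ r₁ ≤ r} → ℝ satisfy 0 ≤ q(r,r₁) ≤ r − r₁. For k ≥ 1 define a_k(r) = ∫_{r ≥ r₁ ≥ r₂ ≥ ⋯ ≥ r_k ≥ 0} q(r,r₁) q(r₁,r₂) ⋯ q(r_{k−1},r_k) dr₁ ⋯ dr_k. Then 0 ≤ a_k(r) ≤ r^{2k}/(2k)!. -/

import Mathlib

open MeasureTheory Set

namespace Stmt1Aux

/-- The simplex `r ≥ x 0 ≥ x 1 ≥ ⋯ ≥ x k ≥ 0`. -/
def S (k : ℕ) (r : ℝ) : Set (Fin (k+1) → ℝ) :=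
  {x | x 0 ≤ r ∧ (∀ i, 0 ≤ x i) ∧ ∀ i j : Fin (k+1), i ≤ j → x j ≤ x i}

/-- The product of consecutive differences. -/
noncomputable def G (k : ℕ) (r : ℝ) (x : Fin (k+1) → ℝ) : ℝ :=
  (r - x 0) * ∏ i : Fin k, (x i.castSucc - x i.succ)

lemma isClosed_S (k : ℕ) (r : ℝ) : IsClosed (S k r) := by
  have h1 : IsClosed {x : Fin (k+1) → ℝ | x 0 ≤ r} :=
    isClosed_le (continuous_apply 0) continuous_const
  have h2 : IsClosed {x : Fin (k+1) → ℝ | ∀ i, 0 ≤ x i} := by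
    have h : {x : Fin (k+1) → ℝ | ∀ i, 0 ≤ x i} = ⋂ i, {x | 0 ≤ x i} := by ext; simp
    rw [h]
    exact isClosed_iInter fun i => isClosed_le continuous_const (continuous_apply i)
  have h3 : IsClosed {x : Fin (k+1) → ℝ | ∀ i j : Fin (k+1), i ≤ j → x j ≤ x i} := by
    have h : {x : Fin (k+1) → ℝ | ∀ i j : Fin (k+1), i ≤ j → x j ≤ x i}
        = ⋂ (i) (j) (_ : i ≤ j), {x | x j ≤ x i} := by ext; simp
    rw [h]
    exact isClosed_iInter fun i => isClosed_iInter fun j => isClosed_iInter fun _ =>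
      isClosed_le (continuous_apply j) (continuous_apply i)
  have h : S k r = {x : Fin (k+1) → ℝ | x 0 ≤ r} ∩ ({x | ∀ i, 0 ≤ x i} ∩
      {x | ∀ i j : Fin (k+1), i ≤ j → x j ≤ x i}) := by
    ext x; simp only [S, mem_setOf_eq, mem_inter_iff]
  rw [h]
  exact h1.inter (h2.inter h3)

lemma measurableSet_S (k : ℕ) (r : ℝ) : MeasurableSet (S k r) :=
  (isClosed_S k r).measurableSet

lemma isCompact_S (k : ℕ) (r : ℝ) : IsCompact (S k r) := by
  refine IsCompact.of_isClosed_subset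
    (isCompact_Icc (a := fun _ : Fin (k+1) => (0:ℝ)) (b := fun _ => r)) (isClosed_S k r) ?_
  rintro x ⟨h1, h2, h3⟩
  simp only [mem_Icc, Pi.le_def]
  exact ⟨fun i => h2 i, fun i => le_trans (h3 0 i (Fin.zero_le i)) h1⟩

lemma continuous_G (k : ℕ) (r : ℝ) : Continuous (G k r) := by
  unfold G
  exact (continuous_const.sub (continuous_apply 0)).mul
    (continuous_finset_prod _ fun i _ => (continuous_apply _).sub (continuous_apply _))

lemma integrableOn_G (k : ℕ) (r : ℝ) : IntegrableOn (G k r) (S k r) volume :=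
  (continuous_G k r).continuousOn.integrableOn_compact (isCompact_S k r)

lemma cons_mem_S_iff {k : ℕ} {r s : ℝ} {y : Fin (k+1) → ℝ} :
    Fin.cons s y ∈ S (k+1) r ↔ 0 ≤ s ∧ s ≤ r ∧ y ∈ S k s := by
  constructor
  · rintro ⟨h1, h2, h3⟩
    refine ⟨by simpa using h2 0, by simpa using h1, ?_, fun i => by simpa using h2 i.succ,
      fun i j hij => ?_⟩
    · have := h3 0 (Fin.succ 0) (Fin.zero_le _)
      simpa using this
    · have := h3 i.succ j.succ (by simpa using hij)
      simpa using this
  · rintro ⟨hs0, hsr, hy0, hy1, hy2⟩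
    refine ⟨by simpa using hsr, ?_, ?_⟩
    · intro i
      induction i using Fin.cases with
      | zero => simpa using hs0
      | succ i => simpa using hy1 i
    · intro i j hij
      induction j using Fin.cases with
      | zero =>
        simp [show i = 0 from le_antisymm hij (Fin.zero_le i)]
      | succ j =>
        induction i using Fin.cases with
        | zero =>
          simpa using le_trans (le_trans (hy2 0 j (Fin.zero_le j)) hy0) le_rfl
        | succ i =>
          simpa using hy2 i j (by simpa using hij)

lemma G_cons {k : ℕ} (r s : ℝ) (y : Fin (k+1) → ℝ) :
    G (k+1) r (Fin.cons s y) = (r - s) * G k s y := by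
  unfold G
  rw [Fin.prod_univ_succ]
  simp only [Fin.cons_zero, Fin.cons_succ, Fin.castSucc_zero, ← Fin.succ_castSucc]
  try simp only [Fin.cons_succ]
  try ring

/-- The splitting equivalence with plainly-typed codomain. -/
noncomputable def E (k : ℕ) : (Fin (k+2) → ℝ) ≃ᵐ ℝ × (Fin (k+1) → ℝ) :=
  MeasurableEquiv.piFinSuccAbove (fun _ : Fin (k+2) => ℝ) 0

lemma mpE (k : ℕ) : MeasurePreserving (E k).symm :=
  (volume_preserving_piFinSuccAbove (fun _ : Fin (k+2) => ℝ) 0).symm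

lemma E_symm_apply (k : ℕ) (p : ℝ × (Fin (k+1) → ℝ)) :
    (E k).symm p = Fin.cons p.1 p.2 := by
  simp only [E, MeasurableEquiv.piFinSuccAbove_symm_apply, Fin.insertNthEquiv,
    Equiv.coe_fn_mk, Fin.insertNth_zero']

/-- The pulled-back integrand. -/
noncomputable def Ff (k : ℕ) (r : ℝ) : ℝ × (Fin (k+1) → ℝ) → ℝ :=
  fun p => G (k+1) r ((E k).symm p)

/-- The pulled-back simplex. -/
def Tset (k : ℕ) (r : ℝ) : Set (ℝ × (Fin (k+1) → ℝ)) :=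
  (E k).symm ⁻¹' (S (k+1) r)

lemma measurableSet_T (k : ℕ) (r : ℝ) : MeasurableSet (Tset k r) :=
  (E k).symm.measurable (measurableSet_S (k+1) r)

lemma mem_T_iff {k : ℕ} {r : ℝ} (p : ℝ × (Fin (k+1) → ℝ)) :
    p ∈ Tset k r ↔ 0 ≤ p.1 ∧ p.1 ≤ r ∧ p.2 ∈ S k p.1 := by
  rw [Tset, mem_preimage, E_symm_apply]
  exact cons_mem_S_iff

lemma Ff_eval {k : ℕ} (r : ℝ) (p : ℝ × (Fin (k+1) → ℝ)) :
    Ff k r p = (r - p.1) * G k p.1 p.2 := by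
  rw [Ff, E_symm_apply]
  exact G_cons r p.1 p.2

lemma integrableOn_Ff (k : ℕ) (r : ℝ) : IntegrableOn (Ff k r) (Tset k r) volume := by
  have h1 := (mpE k).restrict_preimage_emb (MeasurableEquiv.measurableEmbedding _)
    (S (k+1) r)
  have h2 := (h1.integrable_comp_emb (MeasurableEquiv.measurableEmbedding _)).2
    (integrableOn_G (k+1) r)
  have h3 : IntegrableOn (fun p : ℝ × (Fin (k+1) → ℝ) => G (k+1) r ((E k).symm p))
      ((E k).symm ⁻¹' (S (k+1) r)) volume := h2
  exact h3

lemma integrable_ind (k : ℕ) (r : ℝ) :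
    Integrable ((Tset k r).indicator (Ff k r)) ((volume : Measure ℝ).prod volume) := by
  rw [← Measure.volume_eq_prod]
  exact (integrable_indicator_iff (measurableSet_T k r)).2 (integrableOn_Ff k r)

lemma step1 (k : ℕ) (r : ℝ) :
    ∫ x in S (k+1) r, G (k+1) r x = ∫ p, (Tset k r).indicator (Ff k r) p := by
  rw [integral_indicator (measurableSet_T k r)]
  exact ((mpE k).setIntegral_preimage_emb (MeasurableEquiv.measurableEmbedding _)
    (G (k+1) r) (S (k+1) r)).symm

set_option maxHeartbeats 1000000 in
lemma main (k : ℕ) : ∀ r : ℝ, 0 ≤ r →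
    ∫ x in S k r, G k r x = r ^ (2*(k+1)) / (Nat.factorial (2*(k+1)) : ℝ) := by
  induction k with
  | zero =>
    intro r hr
    have hd : ∀ i : Fin (0+1), i = (0 : Fin (0+1)) := fun i => Fin.ext (by omega)
    have hS : S 0 r = (MeasurableEquiv.funUnique (Fin 1) ℝ) ⁻¹' (Icc 0 r) := by
      ext x
      simp only [S, mem_setOf_eq, mem_preimage, MeasurableEquiv.funUnique_apply, mem_Icc]
      constructor
      · rintro ⟨ha, hb, -⟩
        exact ⟨by simpa using hb 0, by simpa using ha⟩
      · rintro ⟨ha, hb⟩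
        refine ⟨by simpa using hb, fun i => ?_, fun i j _ => ?_⟩
        · rw [hd i, ← hd default]; exact ha
        · rw [hd i, hd j]
    have hG : ∀ x : Fin 1 → ℝ,
        G 0 r x = (fun s => r - s) ((MeasurableEquiv.funUnique (Fin 1) ℝ) x) := by
      intro x
      simp [G, MeasurableEquiv.funUnique_apply, hd default]
    rw [hS]
    rw [show (fun x => G 0 r x)
        = fun x => (fun s => r - s) ((MeasurableEquiv.funUnique (Fin 1) ℝ) x) from funext hG]
    erw [MeasurePreserving.setIntegral_preimage_emb (volume_preserving_funUnique (Fin 1) ℝ)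
      (MeasurableEquiv.measurableEmbedding _) (fun s => r - s) (Icc 0 r)]
    rw [integral_Icc_eq_integral_Ioc, ← intervalIntegral.integral_of_le hr]
    rw [intervalIntegral.integral_sub intervalIntegrable_const
      intervalIntegral.intervalIntegrable_id,
      intervalIntegral.integral_const, integral_id]
    norm_num [Nat.factorial]
    ring
  | succ k ih =>
    intro r hr
    have hinner : ∀ s : ℝ,
        (∫ y, (Tset k r).indicator (Ff k r) (s, y)) =
          Set.indicator (Icc 0 r)
            (fun s => (r - s) * (s ^ (2*(k+1)) / (Nat.factorial (2*(k+1)) : ℝ))) s := by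
      intro s
      by_cases hs : s ∈ Icc 0 r
      · obtain ⟨hs0, hsr⟩ := hs
        have h1 : (fun y => (Tset k r).indicator (Ff k r) (s, y)) =
            (S k s).indicator (fun y => (r - s) * G k s y) := by
          funext y
          by_cases hy : y ∈ S k s
          · rw [Set.indicator_of_mem ((mem_T_iff (s, y)).2 ⟨hs0, hsr, hy⟩),
              Set.indicator_of_mem hy]
            exact Ff_eval r (s, y)
          · rw [Set.indicator_of_notMem hy, Set.indicator_of_notMem]
            intro hmem
            exact hy ((mem_T_iff _).1 hmem).2.2
        rw [h1, integral_indicator (measurableSet_S k s), integral_const_mul, ih s hs0,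
          Set.indicator_of_mem (mem_Icc.mpr ⟨hs0, hsr⟩)]
      · have h1 : (fun y => (Tset k r).indicator (Ff k r) (s, y)) = fun _ => (0:ℝ) := by
          funext y
          apply Set.indicator_of_notMem
          intro hmem
          exact hs ⟨((mem_T_iff _).1 hmem).1, ((mem_T_iff _).1 hmem).2.1⟩
        rw [h1, integral_zero, Set.indicator_of_notMem hs]
    rw [step1 k r, Measure.volume_eq_prod, integral_prod _ (integrable_ind k r)]
    simp_rw [hinner]
    rw [integral_indicator measurableSet_Icc, integral_Icc_eq_integral_Ioc,
      ← intervalIntegral.integral_of_le hr]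
    set m := 2*(k+1) with hm
    have hexp : ∀ s : ℝ, (r - s) * (s ^ m / (Nat.factorial m : ℝ)) =
        (r / (Nat.factorial m : ℝ)) * s ^ m - (1 / (Nat.factorial m : ℝ)) * s ^ (m+1) := by
      intro s; ring
    simp_rw [hexp]
    rw [intervalIntegral.integral_sub
      ((intervalIntegral.intervalIntegrable_pow m).const_mul _)
      ((intervalIntegral.intervalIntegrable_pow (m+1)).const_mul _),
      intervalIntegral.integral_const_mul, intervalIntegral.integral_const_mul,
      integral_pow, integral_pow]
    have hfac : (Nat.factorial (m+2) : ℝ)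
        = ((m:ℝ)+2) * (((m:ℝ)+1) * (Nat.factorial m : ℝ)) := by
      rw [Nat.factorial_succ, Nat.factorial_succ]
      push_cast
      ring
    have hexp2 : 2*(k+1+1) = m + 2 := by omega
    rw [hexp2, hfac]
    have h0 : (Nat.factorial m : ℝ) ≠ 0 := by positivity
    have h1 : ((m:ℝ)+1) ≠ 0 := by positivity
    have h2 : ((m:ℝ)+2) ≠ 0 := by positivity
    rw [zero_pow (Nat.succ_ne_zero m), zero_pow (Nat.succ_ne_zero (m+1))]
    push_cast
    field_simp
    ring

end Stmt1Aux

open Stmt1Aux in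
/-- If `0 ≤ q(r,r₁) ≤ r - r₁` on `{0 ≤ r₁ ≤ r}`, then the iterated
integral `a_k(r)` of `q(r,r₁)q(r₁,r₂)⋯q(r_{k-1},r_k)` over the simplex
`r ≥ r₁ ≥ ⋯ ≥ r_k ≥ 0` satisfies `0 ≤ a_k(r) ≤ r^{2k}/(2k)!` (stated for
`k = n+1 ≥ 1`). -/
theorem stmt1 (q : ℝ → ℝ → ℝ)
    (hq : ∀ r r₁ : ℝ, 0 ≤ r₁ → r₁ ≤ r → 0 ≤ q r r₁ ∧ q r r₁ ≤ r - r₁)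
    (n : ℕ) (r : ℝ) (hr : 0 ≤ r) :
    0 ≤ (∫ x : Fin (n+1) → ℝ in
          {x | x 0 ≤ r ∧ (∀ i, 0 ≤ x i) ∧ ∀ i j : Fin (n+1), i ≤ j → x j ≤ x i},
          q r (x 0) * ∏ i : Fin n, q (x i.castSucc) (x i.succ)) ∧
    (∫ x : Fin (n+1) → ℝ in
          {x | x 0 ≤ r ∧ (∀ i, 0 ≤ x i) ∧ ∀ i j : Fin (n+1), i ≤ j → x j ≤ x i},
          q r (x 0) * ∏ i : Fin n, q (x i.castSucc) (x i.succ))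
      ≤ r ^ (2 * (n + 1)) / (Nat.factorial (2 * (n + 1)) : ℝ) := by
  have hset : {x : Fin (n+1) → ℝ | x 0 ≤ r ∧ (∀ i, 0 ≤ x i) ∧
      ∀ i j : Fin (n+1), i ≤ j → x j ≤ x i} = S n r := rfl
  rw [hset]
  set f : (Fin (n+1) → ℝ) → ℝ :=
    fun x => q r (x 0) * ∏ i : Fin n, q (x i.castSucc) (x i.succ) with hf
  have key : ∀ x ∈ S n r, 0 ≤ f x ∧ f x ≤ G n r x := by
    rintro x ⟨h1, h2, h3⟩
    have hx0 : 0 ≤ q r (x 0) ∧ q r (x 0) ≤ r - x 0 := hq r (x 0) (h2 0) h1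
    have hxi : ∀ i : Fin n, 0 ≤ q (x i.castSucc) (x i.succ) ∧
        q (x i.castSucc) (x i.succ) ≤ x i.castSucc - x i.succ :=
      fun i => hq _ _ (h2 i.succ) (h3 i.castSucc i.succ (Fin.castSucc_le_succ i))
    have hprodnn : 0 ≤ ∏ i : Fin n, q (x i.castSucc) (x i.succ) :=
      Finset.prod_nonneg fun i _ => (hxi i).1
    refine ⟨mul_nonneg hx0.1 hprodnn, ?_⟩
    exact mul_le_mul hx0.2
      (Finset.prod_le_prod (fun i _ => (hxi i).1) (fun i _ => (hxi i).2))
      hprodnn (le_trans hx0.1 hx0.2)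
  constructor
  · exact setIntegral_nonneg (measurableSet_S n r) (fun x hx => (key x hx).1)
  · by_cases hfi : IntegrableOn f (S n r) volume
    · calc ∫ x in S n r, f x
          ≤ ∫ x in S n r, G n r x :=
            setIntegral_mono_on hfi (integrableOn_G n r) (measurableSet_S n r)
              (fun x hx => (key x hx).2)
        _ = r ^ (2 * (n + 1)) / (Nat.factorial (2 * (n + 1)) : ℝ) := main n r hr
    · rw [integral_undef hfi]
      positivity
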